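/- Let $V_1, \ldots, V_n$ be finite nonempty families of vectors in $\mathbb{R}^d$ with $0 \in \mathrm{conv}(V_1) + \cdots + \mathrm{conv}(V_n)$. Then there exist convex coefficient vectors $\lambda_i$ on each $V_i$ (i.e., $\lambda_i(v) \geq 0$ and $\sum_{v \in V_i} \lambda_i(v) = 1$) such that $\sum_{i=1}^n \sum_{v \in V_i} \lambda_i(v) v = 0$, at most $d$ of the indices $i$ have $\lambda_i$ with some coordinate strictly between $0$ and $1$, and the total number of coordinates (over all $i$ and $v$) strictly between $0$ and $1$ is at most $2d$. -/

import Mathlib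

open scoped Pointwise

open Finset

namespace SFaux

variable {d n : ℕ} (V : Fin n → Finset (Fin d → ℝ))

noncomputable def allPairs : Finset (Fin n × (Fin d → ℝ)) :=
  Finset.univ.biUnion fun i => (V i).image fun v => (i, v)

lemma mem_allPairs {p : Fin n × (Fin d → ℝ)} :
    p ∈ allPairs V ↔ p.2 ∈ V p.1 := by
  obtain ⟨i, v⟩ := p
  simp only [allPairs, Finset.mem_biUnion, Finset.mem_univ, true_and, Finset.mem_image]
  constructor
  · rintro ⟨j, w, hw, h⟩
    obtain ⟨rfl, rfl⟩ : j = i ∧ w = v := by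
      simpa [Prod.ext_iff] using h
    exact hw
  · intro h; exact ⟨i, v, h, rfl⟩

noncomputable def fracPairs (lam : Fin n → (Fin d → ℝ) → ℝ) :
    Finset (Fin n × (Fin d → ℝ)) :=
  (allPairs V).filter fun p => 0 < lam p.1 p.2 ∧ lam p.1 p.2 < 1

lemma mem_fracPairs {lam : Fin n → (Fin d → ℝ) → ℝ} {p : Fin n × (Fin d → ℝ)} :
    p ∈ fracPairs V lam ↔ p.2 ∈ V p.1 ∧ 0 < lam p.1 p.2 ∧ lam p.1 p.2 < 1 := by
  simp [fracPairs, mem_allPairs]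

noncomputable def fracFams (lam : Fin n → (Fin d → ℝ) → ℝ) : Finset (Fin n) :=
  Finset.univ.filter fun i => ∃ v ∈ V i, 0 < lam i v ∧ lam i v < 1

lemma mem_fracFams {lam : Fin n → (Fin d → ℝ) → ℝ} {i : Fin n} :
    i ∈ fracFams V lam ↔ ∃ v ∈ V i, 0 < lam i v ∧ lam i v < 1 := by
  simp [fracFams]

def IsValid (lam : Fin n → (Fin d → ℝ) → ℝ) : Prop :=
  (∀ i, ∀ v ∈ V i, 0 ≤ lam i v) ∧
  (∀ i, ∑ v ∈ V i, lam i v = 1) ∧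
  (∑ i, ∑ v ∈ V i, lam i v • v = 0)

/-- Lemma A : existence of some valid system of coefficients. -/
lemma exists_valid (h0 : (0 : Fin d → ℝ) ∈ ∑ i, convexHull ℝ (V i : Set (Fin d → ℝ))) :
    ∃ lam, IsValid V lam := by
  rw [Set.mem_fintype_sum] at h0
  obtain ⟨g, hg, hsum⟩ := h0
  have h : ∀ i, ∃ w : (Fin d → ℝ) → ℝ, (∀ y ∈ V i, 0 ≤ w y) ∧ ∑ y ∈ V i, w y = 1 ∧
      (V i).centerMass w id = g i := by
    intro i
    have := hg i
    rw [Finset.convexHull_eq] at this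
    exact this
  choose w hw0 hw1 hcm using h
  refine ⟨w, hw0, hw1, ?_⟩
  have : ∀ i, ∑ v ∈ V i, w i v • v = g i := by
    intro i
    rw [← hcm i, Finset.centerMass_eq_of_sum_1 _ _ (hw1 i)]
    simp
  simp only [this]
  exact hsum

/-- Lemma B : each fractional family contributes at least two fractional pairs. -/
lemma two_mul_card_le (lam : Fin n → (Fin d → ℝ) → ℝ) (h : IsValid V lam) :
    2 * (fracFams V lam).card ≤ (fracPairs V lam).card := by
  classical
  obtain ⟨hpos, hone, -⟩ := h
  have hcard : (fracPairs V lam).card =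
      ∑ i ∈ fracFams V lam, ((fracPairs V lam).filter fun q => q.1 = i).card := by
    apply Finset.card_eq_sum_card_fiberwise
    intro q hq
    rw [Finset.mem_coe, mem_fracPairs] at hq
    rw [Finset.mem_coe, mem_fracFams]
    exact ⟨q.2, hq.1, hq.2⟩
  rw [hcard]
  have h2 : ∀ i ∈ fracFams V lam, 2 ≤ ((fracPairs V lam).filter fun q => q.1 = i).card := by
    intro i hi
    rw [mem_fracFams] at hi
    obtain ⟨v, hv, hv0, hv1⟩ := hi
    -- find a second fractional vector in family i
    have hsum_erase : ∑ u ∈ (V i).erase v, lam i u = 1 - lam i v := by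
      have := Finset.add_sum_erase (V i) (lam i) hv
      linarith [hone i, this]
    have hpos_erase : 0 < ∑ u ∈ (V i).erase v, lam i u := by
      rw [hsum_erase]; linarith
    have hex : ∃ u ∈ (V i).erase v, 0 < lam i u := by
      by_contra hc
      push_neg at hc
      have : ∑ u ∈ (V i).erase v, lam i u ≤ 0 :=
        Finset.sum_nonpos fun u hu => hc u hu
      linarith
    obtain ⟨u, hu, hu0⟩ := hex
    have huV : u ∈ V i := Finset.mem_of_mem_erase hu
    have hune : u ≠ v := Finset.ne_of_mem_erase hu
    have hu1 : lam i u < 1 := by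
      have hle : lam i u ≤ ∑ w ∈ (V i).erase v, lam i w :=
        Finset.single_le_sum (fun w hw => hpos i w (Finset.mem_of_mem_erase hw)) hu
      rw [hsum_erase] at hle
      linarith
    rw [show (2 : ℕ) = 1 + 1 from rfl, ← Nat.lt_iff_add_one_le, Finset.one_lt_card]
    refine ⟨(i, v), ?_, (i, u), ?_, ?_⟩
    · rw [Finset.mem_filter, mem_fracPairs]; exact ⟨⟨hv, hv0, hv1⟩, rfl⟩
    · rw [Finset.mem_filter, mem_fracPairs]; exact ⟨⟨huV, hu0, hu1⟩, rfl⟩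
    · simp [Prod.ext_iff, hune.symm]
  calc 2 * (fracFams V lam).card = ∑ _i ∈ fracFams V lam, 2 := by
        rw [Finset.sum_const, smul_eq_mul, mul_comm]
    _ ≤ ∑ i ∈ fracFams V lam, ((fracPairs V lam).filter fun q => q.1 = i).card :=
        Finset.sum_le_sum h2

/-- Lemma C : if there are too many fractional pairs, we can reduce their number. -/
lemma decrease (lam : Fin n → (Fin d → ℝ) → ℝ) (h : IsValid V lam)
    (hlt : (fracFams V lam).card + d < (fracPairs V lam).card) :
    ∃ lam', IsValid V lam' ∧ (fracPairs V lam').card < (fracPairs V lam).card := by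
  classical
  obtain ⟨hpos, hone, hzero⟩ := h
  set F := fracPairs V lam with hFdef
  set K := fracFams V lam with hKdef
  have hmemF : ∀ q : Fin n × (Fin d → ℝ),
      q ∈ F ↔ q.2 ∈ V q.1 ∧ 0 < lam q.1 q.2 ∧ lam q.1 q.2 < 1 := by
    intro q; rw [hFdef]; exact mem_fracPairs V
  have hmemK : ∀ i : Fin n, i ∈ K ↔ ∃ v ∈ V i, 0 < lam i v ∧ lam i v < 1 := by
    intro i; rw [hKdef]; exact mem_fracFams V
  -- a linear map whose kernel element provides the perturbation direction
  let c : {q // q ∈ F} → (Fin d ⊕ {i // i ∈ K}) → ℝ := fun p =>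
    Sum.elim (fun a => (p : Fin n × (Fin d → ℝ)).2 a)
      (fun i => if (p : Fin n × (Fin d → ℝ)).1 = (i : Fin n) then 1 else 0)
  let T : ({q // q ∈ F} → ℝ) →ₗ[ℝ] ((Fin d ⊕ {i // i ∈ K}) → ℝ) :=
    { toFun := fun μ j => ∑ p : {q // q ∈ F}, μ p * c p j
      map_add' := by
        intro x y; funext j
        simp [add_mul, Finset.sum_add_distrib]
      map_smul' := by
        intro r x; funext j
        simp [Finset.mul_sum, mul_assoc] }
  have hnotinj : ¬ Function.Injective T := by
    intro hinj
    have hle := LinearMap.finrank_le_finrank_of_injective hinj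
    rw [Module.finrank_fintype_fun_eq_card, Module.finrank_fintype_fun_eq_card] at hle
    rw [Fintype.card_coe] at hle
    rw [Fintype.card_sum, Fintype.card_fin, Fintype.card_coe] at hle
    omega
  rw [Function.not_injective_iff] at hnotinj
  obtain ⟨x, y, hxy, hne⟩ := hnotinj
  set μ : {q // q ∈ F} → ℝ := x - y with hμdef
  have hμ0 : T μ = 0 := by rw [hμdef, map_sub, hxy, sub_self]
  have hμne : μ ≠ 0 := sub_ne_zero.mpr hne
  -- the perturbation as a function on all pairs
  set ν : Fin n × (Fin d → ℝ) → ℝ := fun q => if h : q ∈ F then μ ⟨q, h⟩ else 0 with hνdef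
  have hν_off : ∀ q, q ∉ F → ν q = 0 := fun q hq => dif_neg hq
  have hν_on : ∀ (q) (hq : q ∈ F), ν q = μ ⟨q, hq⟩ := fun q hq => dif_pos hq
  have hsum_transfer : ∀ g : (Fin n × (Fin d → ℝ)) → ℝ,
      ∑ p : {q // q ∈ F}, μ p * g p = ∑ q ∈ F, ν q * g q := by
    intro g
    rw [← Finset.sum_attach F (fun q => ν q * g q), Finset.univ_eq_attach]
    apply Finset.sum_congr rfl
    intro p _
    rw [hν_on p.1 p.2]
  -- consequences of T μ = 0
  have hvec : ∑ q ∈ F, ν q • (q.2 : Fin d → ℝ) = 0 := by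
    funext a
    have h1 := congrFun hμ0 (Sum.inl a)
    simp only [T, LinearMap.coe_mk, AddHom.coe_mk, Pi.zero_apply] at h1
    have := hsum_transfer (fun q => q.2 a)
    simp only [c, Sum.elim_inl] at h1
    rw [this] at h1
    simpa [Finset.sum_apply] using h1
  have hfam : ∀ i : Fin n, ∑ v ∈ V i, ν (i, v) = 0 := by
    intro i
    by_cases hiK : i ∈ K
    · have h2 := congrFun hμ0 (Sum.inr ⟨i, hiK⟩)
      simp only [T, LinearMap.coe_mk, AddHom.coe_mk, Pi.zero_apply] at h2
      have htr := hsum_transfer (fun q => if q.1 = i then 1 else 0)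
      simp only [c, Sum.elim_inr] at h2
      rw [htr] at h2
      -- rewrite the RHS sum as a sum over the fiber
      have hfiber : ∑ q ∈ F, ν q * (if q.1 = i then 1 else 0)
          = ∑ q ∈ F.filter (fun q => q.1 = i), ν q := by
        rw [Finset.sum_filter]
        apply Finset.sum_congr rfl
        intro q _
        by_cases hqi : q.1 = i <;> simp [hqi]
      rw [hfiber] at h2
      -- and the fiber sum as a sum over V i
      have hbij : ∑ v ∈ V i, ν (i, v) = ∑ q ∈ F.filter (fun q => q.1 = i), ν q := by
        rw [show ∑ v ∈ V i, ν (i, v)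
            = ∑ v ∈ (V i).filter (fun v => (i, v) ∈ F), ν (i, v) by
          rw [Finset.sum_filter]
          apply Finset.sum_congr rfl
          intro v _
          by_cases hvF : (i, v) ∈ F <;> simp [hvF, hν_off]]
        apply Finset.sum_nbij' (fun v => (i, v)) (fun q => q.2)
        · intro v hv
          rw [Finset.mem_filter] at hv ⊢
          exact ⟨hv.2, rfl⟩
        · intro q hq
          rw [Finset.mem_filter] at hq
          obtain ⟨hqF, hqi⟩ := hq
          have h1 : q.2 ∈ V q.1 := ((hmemF q).mp hqF).1
          have hq2 : (i, q.2) = q := by rw [← hqi]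
          rw [Finset.mem_filter]
          exact ⟨hqi ▸ h1, hq2 ▸ hqF⟩
        · intro v _; rfl
        · intro q hq
          rw [Finset.mem_filter] at hq
          rw [Prod.ext_iff]
          exact ⟨hq.2.symm, rfl⟩
        · intro v _; rfl
      rw [hbij]
      exact h2
    · apply Finset.sum_eq_zero
      intro v hv
      apply hν_off
      intro hF
      apply hiK
      rw [hmemK]
      exact ⟨v, hv, ((hmemF _).mp hF).2⟩
  -- choose the step size
  set S : Finset {q // q ∈ F} := Finset.univ.filter (fun p => μ p ≠ 0) with hSdef
  have hSne : S.Nonempty := by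
    rw [Function.ne_iff] at hμne
    obtain ⟨p, hp⟩ := hμne
    refine ⟨p, ?_⟩
    rw [hSdef, Finset.mem_filter]
    exact ⟨Finset.mem_univ _, by simpa using hp⟩
  set b : {q // q ∈ F} → ℝ := fun p =>
    if 0 < μ p then (1 - lam (p : Fin n × (Fin d → ℝ)).1 (p : Fin n × (Fin d → ℝ)).2) / μ p
    else lam (p : Fin n × (Fin d → ℝ)).1 (p : Fin n × (Fin d → ℝ)).2 / (-μ p) with hbdef
  have hlam_mem : ∀ p : {q // q ∈ F},
      0 < lam (p : Fin n × (Fin d → ℝ)).1 (p : Fin n × (Fin d → ℝ)).2 ∧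
      lam (p : Fin n × (Fin d → ℝ)).1 (p : Fin n × (Fin d → ℝ)).2 < 1 := by
    intro p
    exact ((hmemF _).mp p.2).2
  have hbpos : ∀ p ∈ S, 0 < b p := by
    intro p hp
    rw [hSdef, Finset.mem_filter] at hp
    obtain ⟨hl0, hl1⟩ := hlam_mem p
    simp only [hbdef]
    by_cases hc : 0 < μ p
    · rw [if_pos hc]; exact div_pos (by linarith) hc
    · rw [if_neg hc]
      have : μ p < 0 := lt_of_le_of_ne (not_lt.mp hc) hp.2
      have : 0 < -μ p := by linarith
      positivity
  obtain ⟨p0, hp0S, hp0min⟩ := Finset.exists_min_image S b hSne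
  set t : ℝ := b p0 with htdef
  have ht0 : 0 < t := hbpos p0 hp0S
  have hμp0ne : μ p0 ≠ 0 := by
    rw [hSdef, Finset.mem_filter] at hp0S; exact hp0S.2
  -- the new coefficients
  set lam' : Fin n → (Fin d → ℝ) → ℝ := fun i v => lam i v + t * ν (i, v) with hlam'def
  -- bounds on lam' for pairs in F
  have hbound : ∀ p : {q // q ∈ F},
      0 ≤ lam' (p : Fin n × (Fin d → ℝ)).1 (p : Fin n × (Fin d → ℝ)).2 ∧
      lam' (p : Fin n × (Fin d → ℝ)).1 (p : Fin n × (Fin d → ℝ)).2 ≤ 1 := by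
    intro p
    obtain ⟨hl0, hl1⟩ := hlam_mem p
    have hνp : ν ((p : Fin n × (Fin d → ℝ)).1, (p : Fin n × (Fin d → ℝ)).2) = μ p := by
      rw [Prod.mk.eta]; exact hν_on _ p.2
    have heq : lam' (p : Fin n × (Fin d → ℝ)).1 (p : Fin n × (Fin d → ℝ)).2
        = lam (p : Fin n × (Fin d → ℝ)).1 (p : Fin n × (Fin d → ℝ)).2 + t * μ p := by
      simp only [hlam'def]
      rw [hνp]
    rw [heq]
    rcases lt_trichotomy (μ p) 0 with hc | hc | hc
    · have hpS : p ∈ S := by rw [hSdef, Finset.mem_filter]; exact ⟨Finset.mem_univ _, ne_of_lt hc⟩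
      have hble : t ≤ b p := hp0min p hpS
      simp only [hbdef] at hble
      rw [if_neg (not_lt.mpr (le_of_lt hc))] at hble
      have hμn : 0 < -μ p := by linarith
      have : t * (-μ p) ≤ lam (p : Fin n × (Fin d → ℝ)).1 (p : Fin n × (Fin d → ℝ)).2 := by
        rw [← le_div_iff₀ hμn]
        exact hble
      constructor
      · nlinarith
      · nlinarith
    · rw [hc]; constructor <;> [nlinarith; nlinarith]
    · have hpS : p ∈ S := by rw [hSdef, Finset.mem_filter]; exact ⟨Finset.mem_univ _, ne_of_gt hc⟩
      have hble : t ≤ b p := hp0min p hpS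
      simp only [hbdef] at hble
      rw [if_pos hc] at hble
      have : t * μ p ≤ 1 - lam (p : Fin n × (Fin d → ℝ)).1 (p : Fin n × (Fin d → ℝ)).2 := by
        rw [← le_div_iff₀ hc]
        exact hble
      constructor
      · nlinarith
      · nlinarith
  have hoff : ∀ i v, (i, v) ∉ F → lam' i v = lam i v := by
    intro i v hiv
    simp only [hlam'def]
    rw [hν_off _ hiv, mul_zero, add_zero]
  -- lam' is valid
  have hvalid' : IsValid V lam' := by
    refine ⟨?_, ?_, ?_⟩
    · intro i v hv
      by_cases hF : (i, v) ∈ F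
      · exact (hbound ⟨(i, v), hF⟩).1
      · rw [hoff i v hF]; exact hpos i v hv
    · intro i
      simp only [hlam'def]
      rw [Finset.sum_add_distrib, hone i, ← Finset.mul_sum, hfam i, mul_zero, add_zero]
    · simp only [hlam'def]
      have : ∀ i, ∑ v ∈ V i, (lam i v + t * ν (i, v)) • v
          = (∑ v ∈ V i, lam i v • v) + t • (∑ v ∈ V i, ν (i, v) • v) := by
        intro i
        rw [Finset.smul_sum, ← Finset.sum_add_distrib]
        apply Finset.sum_congr rfl
        intro v _
        rw [add_smul, smul_smul]
      simp only [this]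
      rw [Finset.sum_add_distrib, hzero, ← Finset.smul_sum]
      -- remains : ∑ i, ∑ v ∈ V i, ν (i, v) • v = 0
      have hdouble : ∑ i, ∑ v ∈ V i, ν (i, v) • v = ∑ q ∈ allPairs V, ν q • q.2 := by
        rw [allPairs, Finset.sum_biUnion]
        · apply Finset.sum_congr rfl
          intro i _
          rw [Finset.sum_image]
          intro a _ b _ hab
          simpa [Prod.ext_iff] using hab
        · intro i _ j _ hij
          simp only [Finset.disjoint_left]
          intro q hqi hqj
          rw [Finset.mem_image] at hqi hqj
          obtain ⟨a, -, rfl⟩ := hqi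
          obtain ⟨bb, -, h2⟩ := hqj
          apply hij
          rw [Prod.ext_iff] at h2
          exact h2.1.symm
      have hrestr : ∑ q ∈ allPairs V, ν q • q.2 = ∑ q ∈ F, ν q • q.2 := by
        symm
        apply Finset.sum_subset
        · intro q hq
          rw [mem_allPairs]
          exact ((hmemF q).mp hq).1
        · intro q _ hq
          rw [hν_off q hq, zero_smul]
      rw [hdouble, hrestr, hvec, smul_zero, zero_add]
  -- the fractional pairs of lam' form a strict subset of F
  have hsub : fracPairs V lam' ⊆ F := by
    intro q hq
    rw [mem_fracPairs] at hq
    by_contra hqF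
    rw [hoff q.1 q.2 hqF] at hq
    exact hqF ((hmemF q).mpr ⟨hq.1, hq.2⟩)
  have hp0not : (p0 : Fin n × (Fin d → ℝ)) ∉ fracPairs V lam' := by
    have hνp : ν ((p0 : Fin n × (Fin d → ℝ)).1, (p0 : Fin n × (Fin d → ℝ)).2) = μ p0 := by
      rw [Prod.mk.eta]; exact hν_on _ p0.2
    have hval : lam' (p0 : Fin n × (Fin d → ℝ)).1 (p0 : Fin n × (Fin d → ℝ)).2
        = lam (p0 : Fin n × (Fin d → ℝ)).1 (p0 : Fin n × (Fin d → ℝ)).2 + t * μ p0 := by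
      simp only [hlam'def]
      rw [hνp]
    intro hmem
    rw [mem_fracPairs] at hmem
    rcases lt_or_gt_of_ne hμp0ne with hc | hc
    · -- lam' at p0 equals 0
      have : lam' (p0 : Fin n × (Fin d → ℝ)).1 (p0 : Fin n × (Fin d → ℝ)).2 = 0 := by
        rw [hval, htdef]
        simp only [hbdef]
        rw [if_neg (not_lt.mpr (le_of_lt hc))]
        rw [div_mul_eq_mul_div, div_neg, mul_div_assoc, div_self hμp0ne, mul_one]
        ring
      rw [this] at hmem
      exact lt_irrefl 0 hmem.2.1
    · -- lam' at p0 equals 1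
      have : lam' (p0 : Fin n × (Fin d → ℝ)).1 (p0 : Fin n × (Fin d → ℝ)).2 = 1 := by
        rw [hval, htdef]
        simp only [hbdef]
        rw [if_pos hc]
        field_simp
        ring
      rw [this] at hmem
      exact lt_irrefl 1 hmem.2.2
  refine ⟨lam', hvalid', ?_⟩
  exact Finset.card_lt_card ((Finset.ssubset_iff_of_subset hsub).mpr
    ⟨(p0 : Fin n × (Fin d → ℝ)), p0.2, hp0not⟩)

end SFaux

theorem shapley_folkman_reduction (d n : ℕ)
    (V : Fin n → Finset (Fin d → ℝ))
    (hne : ∀ i, (V i).Nonempty)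
    (h0 : (0 : Fin d → ℝ) ∈ ∑ i, convexHull ℝ (V i : Set (Fin d → ℝ))) :
    ∃ lam : Fin n → (Fin d → ℝ) → ℝ,
      (∀ i, ∀ v ∈ V i, 0 ≤ lam i v) ∧
      (∀ i, ∑ v ∈ V i, lam i v = 1) ∧
      (∑ i, ∑ v ∈ V i, lam i v • v = 0) ∧
      {i : Fin n | ∃ v ∈ V i, lam i v ∈ Set.Ioo (0 : ℝ) 1}.ncard ≤ d ∧
      {p : Fin n × (Fin d → ℝ) |
        p.2 ∈ V p.1 ∧ lam p.1 p.2 ∈ Set.Ioo (0 : ℝ) 1}.ncard ≤ 2 * d := by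
  classical
  obtain ⟨lam0, hlam0⟩ := SFaux.exists_valid V h0
  have hP : ∃ m, ∃ lam, SFaux.IsValid V lam ∧ (SFaux.fracPairs V lam).card = m :=
    ⟨_, lam0, hlam0, rfl⟩
  obtain ⟨lam, hvalid, hm⟩ := Nat.find_spec hP
  set m := Nat.find hP with hmdef
  have hmin : ¬ ((SFaux.fracFams V lam).card + d < (SFaux.fracPairs V lam).card) := by
    intro hlt
    obtain ⟨lam', hv', hc'⟩ := SFaux.decrease V lam hvalid hlt
    have : (SFaux.fracPairs V lam').card < m := by omega
    exact Nat.find_min hP this ⟨lam', hv', rfl⟩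
  have h2k := SFaux.two_mul_card_le V lam hvalid
  push_neg at hmin
  have hkd : (SFaux.fracFams V lam).card ≤ d := by omega
  have hmd : (SFaux.fracPairs V lam).card ≤ 2 * d := by omega
  refine ⟨lam, hvalid.1, hvalid.2.1, hvalid.2.2, ?_, ?_⟩
  · have hset : {i : Fin n | ∃ v ∈ V i, lam i v ∈ Set.Ioo (0 : ℝ) 1}
        = ↑(SFaux.fracFams V lam) := by
      ext i
      simp [SFaux.mem_fracFams, Set.mem_Ioo]
    rw [hset, Set.ncard_coe_finset]
    exact hkd
  · have hset : {p : Fin n × (Fin d → ℝ) | p.2 ∈ V p.1 ∧ lam p.1 p.2 ∈ Set.Ioo (0 : ℝ) 1}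
        = ↑(SFaux.fracPairs V lam) := by
      ext p
      simp [SFaux.mem_fracPairs, Set.mem_Ioo]
    rw [hset, Set.ncard_coe_finset]
    exact hmd
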